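/- arXiv:math/0309351 — 2 statements merged into one kernel-verified Lean document; each statement's English description precedes it below -/
import Mathlib

section
/- Let E be a function on vertices of a finite DAG with unique sink t such that E(t) = 0 and at each non-sink vertex v, E(v) = 1 + (1/|out(v)|)·∑_{u ∈ out-neighbors(v)} E(u). Suppose N₁ and N are functions on vertices with the property that for every vertex v there is a convex combination representation E(v) = c + ∑ᵢ λᵢ E(wᵢ) (λᵢ > 0, ∑λᵢ = 1) with α·∑ᵢ λᵢ(N₁(v)−N₁(wᵢ)) + β·∑ᵢ λᵢ(N(v)−N(wᵢ)) ≥ c, where each wᵢ satisfies N(wᵢ) < N(v). Then E(v) ≤ α·N₁(v) + β·N(v) for all vertices v with E defined, provided the bound holds when N(v) = 0 (i.e., E(v) = 0 there). -/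
open scoped BigOperators

/-- The inductive scheme of the upper-bound proof: if `E` vanishes
where `N` vanishes, and every vertex `v` with `N v > 0` admits a convex-combination
unwinding `E v = c + ∑ᵢ λᵢ E(wᵢ)` with `N(wᵢ) < N v` and
`α ∑ᵢ λᵢ (N₁ v - N₁ wᵢ) + β ∑ᵢ λᵢ (N v - N wᵢ) ≥ c`, then
`E v ≤ α N₁ v + β N v` for every vertex `v`. -/
theorem stmt_9 {V : Type} [Fintype V]
    (α β : ℝ) (hα : 0 ≤ α) (hβ : 0 ≤ β)
    (E : V → ℝ) (N₁ N : V → ℕ)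
    (hbase : ∀ v : V, N v = 0 → E v = 0)
    (hstep : ∀ v : V, 0 < N v →
      ∃ (k : ℕ) (w : Fin k → V) (lam : Fin k → ℝ) (c : ℝ),
        (∀ i, 0 < lam i) ∧
        (∑ i, lam i) = 1 ∧
        (∀ i, N (w i) < N v) ∧
        E v = c + ∑ i, lam i * E (w i) ∧
        α * (∑ i, lam i * ((N₁ v : ℝ) - (N₁ (w i) : ℝ))) +
          β * (∑ i, lam i * ((N v : ℝ) - (N (w i) : ℝ))) ≥ c) :
    ∀ v : V, E v ≤ α * (N₁ v : ℝ) + β * (N v : ℝ) := by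
  suffices H : ∀ n : ℕ, ∀ v : V, N v = n → E v ≤ α * (N₁ v : ℝ) + β * (N v : ℝ) by
    exact fun v => H (N v) v rfl
  intro n
  induction n using Nat.strong_induction_on with
  | _ n ih =>
    intro v hn
    rcases Nat.eq_zero_or_pos n with h0 | hpos
    · subst h0
      rw [hbase v hn, hn]
      push_cast
      positivity
    · obtain ⟨k, w, lam, c, hlp, hls, hlt, hE, hc⟩ := hstep v (hn ▸ hpos)
      have hIH : ∀ i, E (w i) ≤ α * (N₁ (w i) : ℝ) + β * (N (w i) : ℝ) := fun i =>
        ih (N (w i)) (hn ▸ hlt i) (w i) rfl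
      have hsum : ∑ i, lam i * E (w i) ≤
          ∑ i, lam i * (α * (N₁ (w i) : ℝ) + β * (N (w i) : ℝ)) :=
        Finset.sum_le_sum fun i _ =>
          mul_le_mul_of_nonneg_left (hIH i) (hlp i).le
      have key : c + ∑ i, lam i * (α * (N₁ (w i) : ℝ) + β * (N (w i) : ℝ)) ≤
          α * (N₁ v : ℝ) + β * (N v : ℝ) := by
        have expand : α * (∑ i, lam i * ((N₁ v : ℝ) - (N₁ (w i) : ℝ))) +
            β * (∑ i, lam i * ((N v : ℝ) - (N (w i) : ℝ))) +
            ∑ i, lam i * (α * (N₁ (w i) : ℝ) + β * (N (w i) : ℝ)) =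
            (α * (N₁ v : ℝ) + β * (N v : ℝ)) * (∑ i, lam i) := by
          rw [Finset.mul_sum, Finset.mul_sum, Finset.mul_sum, ← Finset.sum_add_distrib,
            ← Finset.sum_add_distrib]
          exact Finset.sum_congr rfl fun i _ => by ring
        rw [hls, mul_one] at expand
        linarith
      calc E v = c + ∑ i, lam i * E (w i) := hE
        _ ≤ c + ∑ i, lam i * (α * (N₁ (w i) : ℝ) + β * (N (w i) : ℝ)) := by linarith
        _ ≤ _ := key
end

section
/- In a 3-regular 3-connected graph, there do not exist four distinct vertices v, w₁, w₂, w₄ such that: v has neighbors including w₁ and w₂; w₁ has neighbors v, w₂, w₄; w₂ has neighbors v, w₁, w₄; and w₄ has neighbors w₁, w₂ and one further vertex — unless the whole graph has only these vertices plus one more. Equivalently: if in a 3-connected 3-regular graph with more than 5 vertices the set {v, w₁, w₂, w₄} induces the above adjacencies, deleting the edge from w₄ to its third neighbor and the third edge at v would disconnect the graph, a contradiction. -/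
lemma nbr_eq {V : Type} [Fintype V] [DecidableEq V] (G : SimpleGraph V)
    [DecidableRel G.Adj] {w a b c : V} (hdeg : G.degree w = 3)
    (hab : a ≠ b) (hac : a ≠ c) (hbc : b ≠ c)
    (h1 : G.Adj w a) (h2 : G.Adj w b) (h3 : G.Adj w c) :
    G.neighborFinset w = {a, b, c} := by
  symm
  apply Finset.eq_of_subset_of_card_le
  · intro x hx
    simp only [Finset.mem_insert, Finset.mem_singleton] at hx
    rcases hx with rfl | rfl | rfl <;> simpa [SimpleGraph.mem_neighborFinset]
  · rw [SimpleGraph.card_neighborFinset_eq_degree, hdeg]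
    rw [Finset.card_insert_of_notMem (by simp [hab, hac]),
        Finset.card_insert_of_notMem (by simp [hbc]), Finset.card_singleton]

/-- In a 3-regular 3-connected graph with more than 5 vertices there
is no configuration of four distinct vertices `v, w₁, w₂, w₄` with `v` adjacent to
`w₁, w₂` (but not `w₄`), `w₁` adjacent to `v, w₂, w₄`, `w₂` adjacent to `v, w₁, w₄`:
cutting the two edges joining `{v, w₁, w₂, w₄}` to the rest would disconnect the
graph, contradicting 3-connectivity. -/
theorem stmt_12 {V : Type} [Fintype V] [DecidableEq V] (G : SimpleGraph V)
    [DecidableRel G.Adj]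
    (hreg : ∀ v : V, G.degree v = 3)
    (h4 : 4 ≤ Fintype.card V)
    (h3conn : ∀ S : Finset V, S.card ≤ 2 → (G.induce {v : V | v ∉ S}).Connected)
    (hbig : 5 < Fintype.card V)
    (v w₁ w₂ w₄ : V)
    (hvw₁ : v ≠ w₁) (hvw₂ : v ≠ w₂) (hvw₄ : v ≠ w₄)
    (hw₁w₂ : w₁ ≠ w₂) (hw₁w₄ : w₁ ≠ w₄) (hw₂w₄ : w₂ ≠ w₄)
    (a1 : G.Adj v w₁) (a2 : G.Adj v w₂)
    (a3 : G.Adj w₁ w₂) (a4 : G.Adj w₁ w₄) (a5 : G.Adj w₂ w₄)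
    (a6 : ¬ G.Adj v w₄) :
    False := by
  have hn1 : G.neighborFinset w₁ = {v, w₂, w₄} :=
    nbr_eq G (hreg w₁) hvw₂ hvw₄ hw₂w₄ a1.symm a3 a4
  have hn2 : G.neighborFinset w₂ = {v, w₁, w₄} :=
    nbr_eq G (hreg w₂) hvw₁ hvw₄ hw₁w₄ a2.symm a3.symm a5
  -- pick z outside the configuration
  obtain ⟨z, hz⟩ : ∃ z, z ∉ ({v, w₁, w₂, w₄} : Finset V) := by
    by_contra h
    push_neg at h
    have hsub : (Finset.univ : Finset V) ⊆ {v, w₁, w₂, w₄} := fun x _ => h x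
    have := Finset.card_le_card hsub
    rw [Finset.card_univ] at this
    have h4c : ({v, w₁, w₂, w₄} : Finset V).card ≤ 4 := by
      apply le_trans (Finset.card_insert_le _ _)
      apply Nat.succ_le_succ
      apply le_trans (Finset.card_insert_le _ _)
      apply Nat.succ_le_succ
      apply le_trans (Finset.card_insert_le _ _)
      simp
    omega
  simp only [Finset.mem_insert, Finset.mem_singleton, not_or] at hz
  obtain ⟨hzv, hzw₁, hzw₂, hzw₄⟩ := hz
  -- remove S = {v, w₄}
  set S : Finset V := {v, w₄} with hS
  have hconn := h3conn S (le_trans (Finset.card_insert_le _ _) (by simp))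
  have hw₁mem : w₁ ∈ {x : V | x ∉ S} := by simp [hS, hvw₁.symm, hw₁w₄]
  have hzmem : z ∈ {x : V | x ∉ S} := by simp [hS, hzv, hzw₄]
  obtain ⟨p⟩ := hconn.preconnected ⟨w₁, hw₁mem⟩ ⟨z, hzmem⟩
  -- walk stays in {w₁, w₂}
  have key : ∀ (a b : {x : V | x ∉ S}),
      (G.induce {x : V | x ∉ S}).Walk a b → (a.1 = w₁ ∨ a.1 = w₂) →
      (b.1 = w₁ ∨ b.1 = w₂) := by
    intro a b p
    induction p with
    | nil => exact id
    | cons h p ih =>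
      rename_i x y c
      intro hx
      apply ih
      have hadj : G.Adj x.1 y.1 := h
      have hy : y.1 ∉ S := y.2
      simp only [hS, Finset.mem_insert, Finset.mem_singleton, not_or] at hy
      rcases hx with hx | hx
      · have : y.1 ∈ G.neighborFinset w₁ := by
          rw [SimpleGraph.mem_neighborFinset]; rw [hx] at hadj; exact hadj
        rw [hn1] at this
        simp only [Finset.mem_insert, Finset.mem_singleton] at this
        rcases this with h' | h' | h' <;> tauto
      · have : y.1 ∈ G.neighborFinset w₂ := by
          rw [SimpleGraph.mem_neighborFinset]; rw [hx] at hadj; exact hadj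
        rw [hn2] at this
        simp only [Finset.mem_insert, Finset.mem_singleton] at this
        rcases this with h' | h' | h' <;> tauto
  have := key _ _ p (Or.inl rfl)
  simp only at this
  tauto
end
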